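/- Let ρ be a probability measure on S^{d−1} with ρ(H^{(a)}) ≤ b for all linear hyperplanes H, and suppose Θ ⊂ S^{d−1} satisfies ρ(Θ) > b. Then there exist directions θ₁, …, θ_d ∈ Θ such that for each i, the distance from θ_{i+1} to the linear span of θ₁,…,θ_i is at least a. -/

import Mathlib

open MeasureTheory Metric Set
open scoped ENNReal

/-- If `ρ` is a probability measure on `S^{d-1}` with `ρ(H^{(a)}) ≤ b` for every linear
hyperplane `H`, and `Θ ⊆ S^{d-1}` satisfies `ρ(Θ) > b`, then one can find directions
`θ₁, …, θ_d ∈ Θ` such that each `θ_{i+1}` is at distance at least `a` from the linear span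
of `θ₁, …, θ_i`. -/
theorem exists_spread_directions (d : ℕ) (ρ : Measure (EuclideanSpace ℝ (Fin d)))
    [IsProbabilityMeasure ρ]
    (hsph : ρ (Metric.sphere (0 : EuclideanSpace ℝ (Fin d)) 1)ᶜ = 0)
    (a b : ℝ) (ha : 0 < a)
    (hH : ∀ H : Submodule ℝ (EuclideanSpace ℝ (Fin d)), Module.finrank ℝ H = d - 1 →
      ρ (Metric.thickening a (H : Set (EuclideanSpace ℝ (Fin d)))) ≤ ENNReal.ofReal b)
    (Θ : Set (EuclideanSpace ℝ (Fin d))) (hΘmeas : MeasurableSet Θ)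
    (hΘsph : Θ ⊆ Metric.sphere (0 : EuclideanSpace ℝ (Fin d)) 1)
    (hΘ : ENNReal.ofReal b < ρ Θ) :
    ∃ θ : Fin d → EuclideanSpace ℝ (Fin d), (∀ i, θ i ∈ Θ) ∧
      ∀ i : Fin d, a ≤ Metric.infDist (θ i)
        ((Submodule.span ℝ (θ '' {j | j < i}) : Submodule ℝ (EuclideanSpace ℝ (Fin d))) :
          Set (EuclideanSpace ℝ (Fin d))) := by
  classical
  -- Step 1: any proper subspace extends to a hyperplane
  have ext_hyp : ∀ W : Submodule ℝ (EuclideanSpace ℝ (Fin d)), Module.finrank ℝ W < d →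
      ∃ H : Submodule ℝ (EuclideanSpace ℝ (Fin d)), Module.finrank ℝ H = d - 1 ∧ W ≤ H := by
    intro W hW
    have hWtop : W < ⊤ := by
      rcases lt_or_eq_of_le (le_top : W ≤ ⊤) with h | h
      · exact h
      · exfalso; rw [h, finrank_top, finrank_euclideanSpace_fin] at hW; omega
    obtain ⟨f, hf0, hfker⟩ := Submodule.exists_le_ker_of_lt_top W hWtop
    refine ⟨LinearMap.ker f, ?_, hfker⟩
    have hrange : LinearMap.range f = ⊤ := by
      rw [LinearMap.range_eq_top]
      obtain ⟨x, hx⟩ : ∃ x, f x ≠ 0 := by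
        by_contra hc
        push_neg at hc
        exact hf0 (LinearMap.ext fun x => hc x)
      intro y
      exact ⟨(y / f x) • x, by simp [div_mul_cancel₀, hx]⟩
    have := LinearMap.finrank_range_add_finrank_ker f
    rw [hrange, finrank_top, Module.finrank_self, finrank_euclideanSpace_fin] at this
    omega
  -- Step 2: key existence lemma
  have key : ∀ s : Set (EuclideanSpace ℝ (Fin d)), Module.finrank ℝ (Submodule.span ℝ s) < d →
      ∃ θ ∈ Θ, a ≤ Metric.infDist θ ((Submodule.span ℝ s : Submodule ℝ (EuclideanSpace ℝ (Fin d))) : Set (EuclideanSpace ℝ (Fin d))) := by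
    intro s hs
    obtain ⟨H, hHrk, hle⟩ := ext_hyp _ hs
    have hnsub : ¬ Θ ⊆ Metric.thickening a (H : Set (EuclideanSpace ℝ (Fin d))) := by
      intro hsub
      exact absurd (le_trans (measure_mono hsub) (hH H hHrk)) (not_le_of_gt hΘ)
    obtain ⟨θ, hθΘ, hθnot⟩ := not_subset.mp hnsub
    refine ⟨θ, hθΘ, ?_⟩
    have hHne : (H : Set (EuclideanSpace ℝ (Fin d))).Nonempty := ⟨0, H.zero_mem⟩
    have h1 : a ≤ Metric.infDist θ (H : Set (EuclideanSpace ℝ (Fin d))) := by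
      by_contra hc
      push_neg at hc
      exact hθnot ((Metric.mem_thickening_iff_infDist_lt hHne).mpr hc)
    have hsubset : ((Submodule.span ℝ s : Submodule ℝ (EuclideanSpace ℝ (Fin d))) : Set (EuclideanSpace ℝ (Fin d))) ⊆ (H : Set (EuclideanSpace ℝ (Fin d))) :=
      Submodule.span_le.mpr (fun x hx => hle (Submodule.subset_span hx))
    exact le_trans h1 (Metric.infDist_le_infDist_of_subset hsubset
      ⟨0, Submodule.zero_mem _⟩)
  -- choice function
  let F : Set (EuclideanSpace ℝ (Fin d)) → EuclideanSpace ℝ (Fin d) := fun s =>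
    if hs : Module.finrank ℝ (Submodule.span ℝ s) < d then (key s hs).choose else 0
  -- recursive construction of sets of chosen points
  let g : ℕ → Set (EuclideanSpace ℝ (Fin d)) := fun n => Nat.rec ∅ (fun _ t => insert (F t) t) n
  have hg0 : g 0 = ∅ := rfl
  have hgsucc : ∀ n, g (n + 1) = insert (F (g n)) (g n) := fun n => rfl
  let h : ℕ → EuclideanSpace ℝ (Fin d) := fun n => F (g n)
  -- g n is the image of {m | m < n} under h
  have himg : ∀ n, g n = h '' {m | m < n} := by
    intro n
    induction n with
    | zero => simp [hg0]
    | succ n ih =>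
      rw [hgsucc]
      have : {m | m < n + 1} = insert n {m | m < n} := by
        ext m; simp [Nat.lt_succ_iff_lt_or_eq, or_comm]; exact Nat.le_iff_lt_or_eq.trans or_comm
      rw [this, Set.image_insert_eq, ← ih]
  -- finrank bound
  have hrk : ∀ n, Module.finrank ℝ (Submodule.span ℝ (g n)) ≤ n := by
    intro n
    induction n with
    | zero =>
      rw [hg0, Submodule.span_empty]
      simp [finrank_bot]
    | succ n ih =>
      rw [hgsucc]
      have : Submodule.span ℝ (insert (F (g n)) (g n)) ≤
          Submodule.span ℝ (g n) ⊔ Submodule.span ℝ ({F (g n)} : Set (EuclideanSpace ℝ (Fin d))) := by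
        rw [← Submodule.span_union]
        apply Submodule.span_mono
        simp [Set.insert_subset_iff]
      calc Module.finrank ℝ (Submodule.span ℝ (insert (F (g n)) (g n)))
          ≤ Module.finrank ℝ ↥(Submodule.span ℝ (g n) ⊔ Submodule.span ℝ ({F (g n)} : Set (EuclideanSpace ℝ (Fin d)))) :=
            by exact Submodule.finrank_mono this
        _ ≤ Module.finrank ℝ (Submodule.span ℝ (g n))
            + Module.finrank ℝ (Submodule.span ℝ ({F (g n)} : Set (EuclideanSpace ℝ (Fin d)))) :=
            by exact Submodule.finrank_add_le_finrank_add_finrank _ _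
        _ ≤ n + 1 := by
            have h1 : Module.finrank ℝ
                (Submodule.span ℝ ({F (g n)} : Set (EuclideanSpace ℝ (Fin d)))) ≤ 1 := by
              simpa using finrank_span_le_card ({F (g n)} : Set (EuclideanSpace ℝ (Fin d)))
            omega
  -- specs for i < d
  have hspec : ∀ n, n < d → h n ∈ Θ ∧
      a ≤ Metric.infDist (h n) ((Submodule.span ℝ (g n) : Submodule ℝ (EuclideanSpace ℝ (Fin d))) : Set (EuclideanSpace ℝ (Fin d))) := by
    intro n hn
    have hlt : Module.finrank ℝ (Submodule.span ℝ (g n)) < d := lt_of_le_of_lt (hrk n) hn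
    have : h n = (key (g n) hlt).choose := by simp only [h, F, dif_pos hlt]
    rw [this]
    exact ⟨(key (g n) hlt).choose_spec.1, (key (g n) hlt).choose_spec.2⟩
  refine ⟨fun i => h i, fun i => (hspec i i.isLt).1, fun i => ?_⟩
  have himage : (fun j : Fin d => h j) '' {j | j < i} = h '' {m : ℕ | m < (i : ℕ)} := by
    ext x
    constructor
    · rintro ⟨j, hj, rfl⟩
      exact ⟨j, hj, rfl⟩
    · rintro ⟨m, hm, rfl⟩
      exact ⟨⟨m, lt_trans hm i.isLt⟩, hm, rfl⟩
  rw [himage, ← himg]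
  exact (hspec i i.isLt).2
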